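/- arXiv:1009.1106 — 5 statements merged into one kernel-verified Lean document; each statement's English description precedes it below -/
import Mathlib

section
/- For every integer n ≥ 3, the Bernoulli numbers satisfy ∑_{j=2}^{n-2} B_{n-j}/(2^{j+1}·(j+2)!·(n-j)!) + B_{n-1}/(24·(n-1)!) + B_n/(4·n!) + B_{n+1}/(n+1)! + (B_{n+2}/(n+2)!)·(4 − 1/2^n) = (n+1)/(2^{n+1}·(n+2)!). -/
open Nat Finset PowerSeries

lemma exp_sub_one_ne : (exp ℚ - 1 : ℚ⟦X⟧) ≠ 0 := by
  intro h
  have := congrArg (coeff 1) h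
  simp [coeff_exp] at this

lemma two_eq_C : (2 : ℚ⟦X⟧) = C 2 := by rw [map_ofNat]

lemma rescale_two_X : rescale (2:ℚ) (X : ℚ⟦X⟧) = 2 * X := by
  ext n
  rw [two_eq_C, coeff_rescale, coeff_C_mul, coeff_X]
  rcases eq_or_ne n 1 with h | h <;> simp [h]

lemma key_series : rescale (2:ℚ) (bernoulliPowerSeries ℚ) * (exp ℚ + 1) = 2 * bernoulliPowerSeries ℚ := by
  apply mul_right_cancel₀ exp_sub_one_ne
  have h2 : (exp ℚ + 1) * (exp ℚ - 1) = rescale (2:ℚ) (exp ℚ - 1) := by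
    have h := exp_mul_exp_eq_exp_add (1:ℚ) 1
    rw [rescale_one] at h
    norm_num at h
    rw [map_sub, ← h]
    simp
    ring
  calc rescale (2:ℚ) (bernoulliPowerSeries ℚ) * (exp ℚ + 1) * (exp ℚ - 1)
      = rescale (2:ℚ) (bernoulliPowerSeries ℚ) * rescale (2:ℚ) (exp ℚ - 1) := by
        rw [mul_assoc, h2]
    _ = rescale (2:ℚ) (bernoulliPowerSeries ℚ * (exp ℚ - 1)) := by rw [map_mul]
    _ = 2 * X := by rw [bernoulliPowerSeries_mul_exp_sub_one, rescale_two_X]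
    _ = 2 * bernoulliPowerSeries ℚ * (exp ℚ - 1) := by
        rw [mul_assoc, bernoulliPowerSeries_mul_exp_sub_one]

lemma keyB (m : ℕ) : ∑ k ∈ range (m+1), (2:ℚ)^k * bernoulli k / ((k.factorial : ℚ) * ((m-k).factorial : ℚ))
    = (2 - 2^m) * bernoulli m / (m.factorial : ℚ) := by
  have h := congrArg (coeff m) key_series
  rw [coeff_mul, Finset.Nat.sum_antidiagonal_eq_sum_range_succ_mk, two_eq_C, coeff_C_mul] at h
  simp only [coeff_rescale, bernoulliPowerSeries, coeff_mk, map_add, coeff_exp, coeff_one,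
    Algebra.algebraMap_self, RingHom.id_apply, one_div] at h
  rw [Finset.sum_range_succ] at h
  rw [Finset.sum_range_succ]
  have e1 : ∀ k ∈ range m, (2:ℚ)^k * (bernoulli k / k.factorial) *
      (((m-k).factorial : ℚ)⁻¹ + if m - k = 0 then 1 else 0)
      = (2:ℚ)^k * bernoulli k / ((k.factorial : ℚ) * ((m-k).factorial : ℚ)) := by
    intro k hk
    rw [mem_range] at hk
    rw [if_neg (by omega), add_zero]
    field_simp
  rw [Finset.sum_congr rfl e1] at h
  have hm : (m.factorial : ℚ) ≠ 0 := by exact_mod_cast m.factorial_ne_zero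
  simp only [Nat.sub_self, Nat.factorial_zero, Nat.cast_one, if_pos rfl, if_true] at h ⊢
  rw [mul_one]
  field_simp at h ⊢
  linarith [h]

set_option maxHeartbeats 2000000 in
/-- For every integer `n ≥ 3`,
`∑_{j=2}^{n-2} B_{n-j}/(2^{j+1}·(j+2)!·(n-j)!) + B_{n-1}/(24·(n-1)!) + B_n/(4·n!)
  + B_{n+1}/(n+1)! + (B_{n+2}/(n+2)!)·(4 − 1/2^n) = (n+1)/(2^{n+1}·(n+2)!)`. -/
theorem stmt_1 (n : ℕ) (hn : 3 ≤ n) :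
    ∑ j ∈ Finset.Icc 2 (n - 2),
        bernoulli (n - j) / ((2 : ℚ) ^ (j + 1) * (j + 2).factorial * (n - j).factorial)
      + bernoulli (n - 1) / (24 * ((n - 1).factorial : ℚ))
      + bernoulli n / (4 * (n.factorial : ℚ))
      + bernoulli (n + 1) / ((n + 1).factorial : ℚ)
      + bernoulli (n + 2) / ((n + 2).factorial : ℚ) * (4 - 1 / (2 : ℚ) ^ n)
    = ((n : ℚ) + 1) / ((2 : ℚ) ^ (n + 1) * ((n + 2).factorial : ℚ)) := by
  obtain ⟨p, rfl⟩ : ∃ p, n = p + 3 := ⟨n - 3, by omega⟩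
  clear hn
  set c : ℕ → ℚ := fun k => (2:ℚ)^k * bernoulli k / ((k.factorial : ℚ) * ((p+5-k).factorial : ℚ)) with hc
  have htot : ∑ k ∈ range (p+6), c k = (2 - 2^(p+5)) * bernoulli (p+5) / ((p+5).factorial : ℚ) := keyB (p+5)
  -- split
  have h1 : ∑ k ∈ Finset.Ico 0 2, c k + ∑ k ∈ Finset.Ico 2 (p+2), c k = ∑ k ∈ Finset.Ico 0 (p+2), c k :=
    Finset.sum_Ico_consecutive c (by omega) (by omega)
  have h2 : ∑ k ∈ Finset.Ico 0 (p+2), c k + ∑ k ∈ Finset.Ico (p+2) (p+6), c k = ∑ k ∈ Finset.Ico 0 (p+6), c k :=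
    Finset.sum_Ico_consecutive c (by omega) (by omega)
  rw [show Finset.Ico 0 (p+6) = range (p+6) by rw [Finset.range_eq_Ico]] at h2
  have hsmall : ∑ k ∈ Finset.Ico 0 2, c k = c 0 + c 1 := by
    rw [show Finset.Ico 0 2 = range 2 by rw [Finset.range_eq_Ico]]
    simp [Finset.sum_range_succ]
  have hbig : ∑ k ∈ Finset.Ico (p+2) (p+6), c k = c (p+2) + c (p+3) + c (p+4) + c (p+5) := by
    rw [Finset.sum_Ico_eq_sum_range, show p+6-(p+2) = 4 by omega]
    simp only [Finset.sum_range_succ, Finset.sum_range_zero, zero_add,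
      show p+2+1 = p+3 by omega, show p+2+2 = p+4 by omega, show p+2+3 = p+5 by omega]
  -- reindex the main sum
  have hre : ∑ j ∈ Finset.Icc 2 (p + 3 - 2),
        bernoulli (p + 3 - j) / ((2 : ℚ) ^ (j + 1) * ((j + 2).factorial : ℚ) * ((p + 3 - j).factorial : ℚ))
      = ∑ k ∈ Finset.Ico 2 (p+2), ((2:ℚ)^(p+4))⁻¹ * c k := by
    apply Finset.sum_nbij' (i := fun j => p + 3 - j) (j := fun k => p + 3 - k)
    · intro a ha; simp only [Finset.mem_Icc, Finset.mem_Ico] at *; omega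
    · intro a ha; simp only [Finset.mem_Icc, Finset.mem_Ico] at *; omega
    · intro a ha; simp only [Finset.mem_Icc] at ha; omega
    · intro a ha; simp only [Finset.mem_Ico] at ha; omega
    · intro j hj
      simp only [Finset.mem_Icc] at hj
      have e1 : p + 5 - (p + 3 - j) = j + 2 := by omega
      have e2 : (2:ℚ) ^ (p+4) = 2 ^ (p + 3 - j) * 2 ^ (j+1) := by
        rw [← pow_add]; congr 1; omega
      rw [hc]
      simp only [e1]
      rw [e2]
      have f1 : ((j+2).factorial : ℚ) ≠ 0 := by exact_mod_cast (j+2).factorial_ne_zero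
      have f2 : (((p+3-j)).factorial : ℚ) ≠ 0 := by exact_mod_cast (p+3-j).factorial_ne_zero
      have f3 : (2:ℚ) ^ (p+3-j) ≠ 0 := by positivity
      have f4 : (2:ℚ) ^ (j+1) ≠ 0 := by positivity
      field_simp
  -- extract mid sum value
  have hmid : ∑ k ∈ Finset.Ico 2 (p+2), c k
      = (2 - 2^(p+5)) * bernoulli (p+5) / ((p+5).factorial : ℚ)
        - (c 0 + c 1) - (c (p+2) + c (p+3) + c (p+4) + c (p+5)) := by
    rw [← htot, ← h2, ← h1, hsmall, hbig]; ring
  rw [show p + 3 - 2 = p + 1 by omega] at *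
  rw [hre, ← Finset.mul_sum, hmid]
  -- now pure arithmetic
  simp only [hc, bernoulli_zero, bernoulli_one]
  norm_num
  rw [show p+5-(p+2) = 3 by omega, show p+5-(p+3) = 2 by omega,
    show p+5-(p+4)=1 by omega, show p+3+1 = p+4 by omega, show p+3+2 = p+5 by omega]
  simp only [show (3:ℕ).factorial = 6 from rfl, show (2:ℕ).factorial = 2 from rfl, Nat.factorial_one]
  have F := fun m : ℕ => (Nat.factorial_ne_zero m)
  have f2 : ((p+2).factorial : ℚ) ≠ 0 := by exact_mod_cast F (p+2)
  have hf3 : ((p+3).factorial : ℚ) = (p+3) * (p+2).factorial := by exact_mod_cast Nat.factorial_succ (p+2)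
  have hf4 : ((p+4).factorial : ℚ) = (p+4) * ((p+3) * (p+2).factorial) := by
    rw [← hf3]; exact_mod_cast Nat.factorial_succ (p+3)
  have hf5 : ((p+5).factorial : ℚ) = (p+5) * ((p+4) * ((p+3) * (p+2).factorial)) := by
    rw [← hf4]; exact_mod_cast Nat.factorial_succ (p+4)
  have hp2 : (2:ℚ) ^ (p+3) ≠ 0 := by positivity
  rw [hf3, hf4, hf5]
  have e3 : (2:ℚ)^(p+4) = 2 * 2^(p+3) := by rw [pow_succ]; ring
  have e4 : (2:ℚ)^(p+5) = 4 * 2^(p+3) := by rw [pow_succ, pow_succ]; ring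
  have e2' : (2:ℚ)^(p+2) = 2^(p+3) / 2 := by rw [pow_succ]; ring
  rw [e3, e4, e2']
  push_cast
  field_simp
  ring
end

section
/- For every integer n ≥ 0, ∑_{j=0}^{n} B_{n-j}/(2^{j+1}·(j+2)!·(n-j)!) + B_{n+1}/(n+1)! + (B_{n+2}/(n+2)!)·(4 − 1/2^n) = 0. -/
open PowerSeries Finset Nat

private noncomputable def Bps : PowerSeries ℚ := bernoulliPowerSeries ℚ
private noncomputable def E2 : PowerSeries ℚ := rescale (2⁻¹ : ℚ) (exp ℚ)
private noncomputable def B2 : PowerSeries ℚ := rescale (2⁻¹ : ℚ) Bps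
private noncomputable def F2 : PowerSeries ℚ := C (2 : ℚ) * (E2 - 1 - C (2⁻¹ : ℚ) * X)

private lemma hE : E2 * E2 = exp ℚ := by
  rw [E2, exp_mul_exp_eq_exp_add]; norm_num

private lemma h1 : Bps * ((E2 - 1) * (E2 + 1)) = X := by
  have := bernoulliPowerSeries_mul_exp_sub_one ℚ
  rw [← hE] at this
  rw [← this]; ring_nf; rw [Bps]; ring

private lemma h2 : B2 * (E2 - 1) = C (2⁻¹ : ℚ) * X := by
  have h := congrArg (rescale (2⁻¹ : ℚ)) (bernoulliPowerSeries_mul_exp_sub_one ℚ)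
  rw [map_mul, map_sub, map_one, rescale_X] at h
  exact h

private lemma hG : Bps * F2 + X * (Bps - 1) + C (4 : ℚ) * (Bps - B2) + X = 0 := by
  have hne : (E2 - 1) * (E2 + 1) ≠ 0 := by
    intro h
    have := h1
    rw [h, mul_zero] at this
    exact X_ne_zero this.symm
  apply mul_right_cancel₀ hne
  rw [zero_mul, F2, map_ofNat, map_ofNat]
  have hc : (C (2⁻¹ : ℚ)) * 2 = 1 := by
    rw [← map_ofNat (C (R := ℚ)) 2, ← map_mul]; norm_num
  linear_combination (2 * (E2 - 1 - C (2⁻¹ : ℚ) * X) + X + 4) * h1 - 4 * (E2 + 1) * h2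
    + (- 2 * X * E2 - 2 * X - X * X) * hc

private lemma coeffB (k : ℕ) : coeff k Bps = bernoulli k / k.factorial := by
  simp [Bps, bernoulliPowerSeries, coeff_mk]

private lemma coeffF2_zero : coeff 0 F2 = 0 := by
  simp only [F2, E2, coeff_C_mul, map_sub, coeff_rescale, coeff_exp, coeff_one, coeff_X]
  norm_num

private lemma coeffF2_one : coeff 1 F2 = 0 := by
  simp only [F2, E2, coeff_C_mul, map_sub, coeff_rescale, coeff_exp, coeff_one, coeff_X]
  norm_num

private lemma coeffF2 (k : ℕ) :
    coeff (k + 2) F2 = (2 : ℚ)⁻¹ ^ (k + 1) / (k + 2).factorial := by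
  simp [F2, E2, coeff_rescale, coeff_exp, coeff_one, coeff_X]
  rw [eq_div_iff (by exact_mod_cast (k+2).factorial_ne_zero)]
  field_simp
  ring

private lemma key (n : ℕ) :
    ∑ j ∈ Finset.range (n + 1),
        bernoulli (n - j) / ((2 : ℚ) ^ (j + 1) * (j + 2).factorial * (n - j).factorial)
      = coeff (n + 2) (Bps * F2) := by
  rw [coeff_mul, Nat.sum_antidiagonal_eq_sum_range_succ_mk]
  have h0 : n + 2 - (n + 2) = 0 := by omega
  have h1 : n + 2 - (n + 1) = 1 := by omega
  conv_rhs => rw [sum_range_succ, sum_range_succ, h0, h1]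
  rw [coeffF2_zero, coeffF2_one, mul_zero, mul_zero, add_zero, add_zero]
  conv_rhs => rw [← Finset.sum_range_reflect]
  apply Finset.sum_congr rfl
  intro j hj
  have hj' : j ≤ n := by simpa [Nat.lt_succ_iff] using hj
  have e1 : n + 1 - 1 - j = n - j := by omega
  have e2 : n + 2 - (n - j) = j + 2 := by omega
  rw [e1, e2]
  dsimp only
  rw [coeffB, coeffF2, inv_pow]
  have h1 : ((j+2).factorial : ℚ) ≠ 0 := by exact_mod_cast (j+2).factorial_ne_zero
  have h2 : ((n-j).factorial : ℚ) ≠ 0 := by exact_mod_cast (n-j).factorial_ne_zero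
  have h3 : ((2:ℚ) ^ (j+1)) ≠ 0 := by positivity
  field_simp

/-- For every integer `n ≥ 0`,
`∑_{j=0}^{n} B_{n-j}/(2^{j+1}·(j+2)!·(n-j)!) + B_{n+1}/(n+1)!
  + (B_{n+2}/(n+2)!)·(4 − 1/2^n) = 0`. -/
theorem stmt_2 (n : ℕ) :
    ∑ j ∈ Finset.range (n + 1),
        bernoulli (n - j) / ((2 : ℚ) ^ (j + 1) * (j + 2).factorial * (n - j).factorial)
      + bernoulli (n + 1) / ((n + 1).factorial : ℚ)
      + bernoulli (n + 2) / ((n + 2).factorial : ℚ) * (4 - 1 / (2 : ℚ) ^ n)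
    = 0 := by
  have h := congrArg (coeff (n + 2)) hG
  simp only [map_add, map_zero, coeff_C_mul, map_sub] at h
  rw [show n + 2 = (n + 1) + 1 from rfl, coeff_succ_X_mul] at h
  rw [coeff_X] at h
  simp only [if_neg (by omega : ¬ (n + 1 + 1 = 1))] at h
  rw [B2, coeff_rescale] at h
  simp only [map_sub, coeffB, map_one, coeff_one] at h
  rw [if_neg (by omega : ¬ (n + 1 = 0))] at h
  rw [key]
  have hf2 : ((n+2).factorial : ℚ) ≠ 0 := by exact_mod_cast (n+2).factorial_ne_zero
  have hp : ((2:ℚ) ^ n) ≠ 0 := by positivity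
  have expand : (bernoulli (n+2) : ℚ) / ((n + 2).factorial : ℚ) * (4 - 1 / (2:ℚ) ^ n)
      = 4 * ((bernoulli (n+2):ℚ) / (n+2).factorial
          - (2:ℚ)⁻¹ ^ (n + 1 + 1) * ((bernoulli (n+2):ℚ) / (n+2).factorial)) := by
    rw [inv_pow]
    field_simp
    ring
  rw [expand]
  linarith [h]
end

section
/- Define rational numbers b_n and b̃_n for n ≥ 2 by the recurrences b_n = ∑_{j=2}^{n-1} (−1)^{n−j+1} b_j/(n−j+1)! + (−1)^n/(n+1)! and b̃_n = ∑_{j=2}^{n-1} (−1)^{n−j+1} b̃_j/(n−j+1)! + (−1)^n/(2^n·n!). Then b_{2l+1} = b̃_{2l+1} for every l ≥ 1. -/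
open PowerSeries Finset

namespace Stmt8Aux

noncomputable def F : ℚ⟦X⟧ := PowerSeries.mk fun m => (-1 : ℚ)^m / ((m+1).factorial : ℚ)
noncomputable def G : ℚ⟦X⟧ := PowerSeries.mk fun m => 1 / ((m+1).factorial : ℚ)
noncomputable def E (e : ℕ → ℚ) : ℚ⟦X⟧ := PowerSeries.mk fun k => if 2 ≤ k then e k else 0

lemma coeff_rescale_exp (a : ℚ) (n : ℕ) :
    (coeff n) (rescale a (exp ℚ)) = a ^ n / (n.factorial : ℚ) := by
  rw [coeff_rescale, coeff_exp]
  simp [div_eq_mul_inv]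

lemma coeff_mul_mk (e g : ℕ → ℚ) (n : ℕ) :
    (coeff n) (E e * PowerSeries.mk g) = ∑ j ∈ Icc 2 n, e j * g (n - j) := by
  rw [coeff_mul, Finset.Nat.sum_antidiagonal_eq_sum_range_succ_mk]
  simp only [E, coeff_mk, ite_mul, zero_mul]
  rw [← Finset.sum_filter]
  congr 1
  ext k
  simp [Nat.lt_succ_iff, and_comm]

lemma XF : (X : ℚ⟦X⟧) * F = 1 - rescale (-1) (exp ℚ) := by
  ext n
  rw [map_sub, coeff_rescale_exp]
  cases n with
  | zero => simp
  | succ k =>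
      simp [F, coeff_succ_X_mul, coeff_one, pow_succ]
      ring

lemma XG : (X : ℚ⟦X⟧) * G = exp ℚ - 1 := by
  ext n
  rw [map_sub, coeff_exp]
  cases n with
  | zero => simp
  | succ k => simp [G, coeff_succ_X_mul, coeff_one]

lemma rescale_exp_mul_exp (a : ℚ) : rescale a (exp ℚ) * exp ℚ = rescale (a + 1) (exp ℚ) := by
  have h : exp ℚ = rescale (1 : ℚ) (exp ℚ) := by rw [rescale_one]; rfl
  nth_rewrite 2 [h]
  rw [exp_mul_exp_eq_exp_add]

lemma F_mul_exp : F * exp ℚ = G := by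
  have hX : (X : ℚ⟦X⟧) * (F * exp ℚ) = X * G := by
    rw [← mul_assoc, XF, XG]
    have h : rescale (-1 : ℚ) (exp ℚ) * exp ℚ = 1 := by
      rw [rescale_exp_mul_exp]
      norm_num [rescale_zero]
    calc (1 - rescale (-1 : ℚ) (exp ℚ)) * exp ℚ
        = exp ℚ - rescale (-1 : ℚ) (exp ℚ) * exp ℚ := by ring
      _ = exp ℚ - 1 := by rw [h]
  exact mul_left_cancel₀ X_ne_zero hX

/-- The recurrence satisfied by the difference sequence `e = b - b̃`. -/
def Rec (e : ℕ → ℚ) : Prop := ∀ n, 2 ≤ n →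
  e n = ∑ j ∈ Icc 2 (n - 1), (-1 : ℚ) ^ (n - j + 1) * e j / ((n - j + 1).factorial : ℚ)
      + (-1 : ℚ) ^ n * (1 / ((n + 1).factorial : ℚ) - 1 / ((2:ℚ)^n * (n.factorial : ℚ)))

lemma EF (e : ℕ → ℚ) (he : Rec e) : E e * F = F - rescale (-(1/2) : ℚ) (exp ℚ) := by
  ext n
  rw [show F = PowerSeries.mk fun m => (-1 : ℚ)^m / ((m+1).factorial : ℚ) from rfl,
    coeff_mul_mk, map_sub, coeff_rescale_exp, coeff_mk]
  rcases lt_or_ge n 2 with hn | hn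
  · interval_cases n <;> norm_num
  · obtain ⟨m, rfl⟩ : ∃ m, n = m + 2 := ⟨n - 2, by omega⟩
    rw [Finset.sum_Icc_succ_top (by omega : 2 ≤ m + 2)]
    have he2 := he (m + 2) (by omega)
    simp only [show m + 2 - 1 = m + 1 from rfl] at he2
    rw [he2, Nat.sub_self]
    have hz : ∑ j ∈ Icc 2 (m + 1), e j * ((-1 : ℚ) ^ (m + 2 - j) / (((m + 2 - j) + 1).factorial : ℚ))
        + ∑ j ∈ Icc 2 (m + 1), (-1 : ℚ) ^ (m + 2 - j + 1) * e j / ((m + 2 - j + 1).factorial : ℚ) = 0 := by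
      rw [← Finset.sum_add_distrib]
      refine Finset.sum_eq_zero fun j hj => ?_
      rw [pow_succ]
      ring
    have hc : ((-1:ℚ)) ^ (m+2) * (1 / (((m+2) + 1).factorial : ℚ) - 1 / ((2:ℚ)^(m+2) * ((m+2).factorial : ℚ)))
        = (-1 : ℚ) ^ (m+2) / (((m+2)+1).factorial : ℚ) - (-(1/2) : ℚ) ^ (m+2) / (((m+2)).factorial : ℚ) := by
      rw [show (-(1/2) : ℚ) = (-1) / 2 by norm_num, div_pow]
      field_simp
    simp only [Nat.factorial] at *
    linarith [hz, hc]

lemma EG (e : ℕ → ℚ) (he : Rec e) : E e * G = G - rescale (1/2 : ℚ) (exp ℚ) := by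
  calc E e * G = (E e * F) * exp ℚ := by rw [mul_assoc, F_mul_exp]
    _ = (F - rescale (-(1/2) : ℚ) (exp ℚ)) * exp ℚ := by rw [EF e he]
    _ = F * exp ℚ - rescale (-(1/2) : ℚ) (exp ℚ) * exp ℚ := by ring
    _ = G - rescale (1/2 : ℚ) (exp ℚ) := by
        rw [F_mul_exp, rescale_exp_mul_exp]; norm_num

lemma relB (e : ℕ → ℚ) (he : Rec e) (n : ℕ) :
    ∑ j ∈ Icc 2 n, e j / (((n - j) + 1).factorial : ℚ)
      = 1 / ((n + 1).factorial : ℚ) - (1/2 : ℚ) ^ n / (n.factorial : ℚ) := by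
  have h := congrArg (coeff n) (EG e he)
  rw [show G = PowerSeries.mk fun m => 1 / ((m+1).factorial : ℚ) from rfl,
    coeff_mul_mk, map_sub, coeff_rescale_exp, coeff_mk] at h
  rw [← h]
  exact Finset.sum_congr rfl fun j _ => by rw [mul_one_div]

lemma odd_zero (e : ℕ → ℚ) (he : Rec e) : ∀ n, 2 ≤ n → Odd n → e n = 0 := by
  intro n
  induction n using Nat.strong_induction_on with
  | _ n IH =>
    intro hn hodd
    obtain ⟨m, rfl⟩ : ∃ m, n = m + 2 := ⟨n - 2, by omega⟩
    have hA := he (m + 2) (by omega)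
    have hB := relB e he (m + 2)
    rw [Finset.sum_Icc_succ_top (by omega : 2 ≤ m + 2)] at hB
    simp only [show m + 2 - 1 = m + 1 from rfl, Nat.sub_self] at hA hB
    have hsgn : ((-1 : ℚ)) ^ (m + 2) = -1 := Odd.neg_one_pow hodd
    have hpow : ((1:ℚ)/2) ^ (m+2) / ((m+2).factorial : ℚ)
        = 1 / ((2:ℚ)^(m+2) * ((m+2).factorial : ℚ)) := by
      rw [div_pow, one_pow]
      field_simp
    have key : 2 * e (m + 2) =
        ∑ j ∈ Icc 2 (m + 1), ((-1 : ℚ) ^ (m + 2 - j + 1) * e j / ((m + 2 - j + 1).factorial : ℚ)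
          - e j / ((m + 2 - j + 1).factorial : ℚ)) := by
      rw [Finset.sum_sub_distrib]
      rw [hsgn] at hA
      rw [show m + 1 + 1 = m + 2 from rfl] at hB
      norm_num at hB
      linear_combination hA + hB - hpow
    have hz : ∑ j ∈ Icc 2 (m + 1), ((-1 : ℚ) ^ (m + 2 - j + 1) * e j / ((m + 2 - j + 1).factorial : ℚ)
          - e j / ((m + 2 - j + 1).factorial : ℚ)) = 0 := by
      refine Finset.sum_eq_zero fun j hj => ?_
      rw [Finset.mem_Icc] at hj
      rcases Nat.even_or_odd j with hje | hjo
      · have hodd' : Odd (m + 2 - j) := Nat.Odd.sub_even (by omega) hodd hje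
        have hev : Even (m + 2 - j + 1) := hodd'.add_one
        rw [hev.neg_one_pow]
        ring
      · rw [IH j (by omega) hj.1 hjo]
        ring
    rw [hz] at key
    linarith

end Stmt8Aux

/-- If `b, b̃ : ℕ → ℚ` satisfy, for all `n ≥ 2`,
`b n = ∑_{j=2}^{n-1} (−1)^{n−j+1} b j/(n−j+1)! + (−1)^n/(n+1)!` and
`b̃ n = ∑_{j=2}^{n-1} (−1)^{n−j+1} b̃ j/(n−j+1)! + (−1)^n/(2^n·n!)`,
then `b (2l+1) = b̃ (2l+1)` for every `l ≥ 1`. -/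
theorem stmt_8 (b bt : ℕ → ℚ)
    (hb : ∀ n, 2 ≤ n →
      b n = ∑ j ∈ Finset.Icc 2 (n - 1),
          (-1 : ℚ) ^ (n - j + 1) * b j / ((n - j + 1).factorial : ℚ)
        + (-1 : ℚ) ^ n / ((n + 1).factorial : ℚ))
    (hbt : ∀ n, 2 ≤ n →
      bt n = ∑ j ∈ Finset.Icc 2 (n - 1),
          (-1 : ℚ) ^ (n - j + 1) * bt j / ((n - j + 1).factorial : ℚ)
        + (-1 : ℚ) ^ n / ((2 : ℚ) ^ n * (n.factorial : ℚ))) :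
    ∀ l : ℕ, 1 ≤ l → b (2 * l + 1) = bt (2 * l + 1) := by
  set e : ℕ → ℚ := fun n => b n - bt n with hedef
  have he : Stmt8Aux.Rec e := by
    intro n hn
    have h1 := hb n hn
    have h2 := hbt n hn
    have hs : (∑ j ∈ Finset.Icc 2 (n - 1),
          (-1 : ℚ) ^ (n - j + 1) * b j / ((n - j + 1).factorial : ℚ))
        - (∑ j ∈ Finset.Icc 2 (n - 1),
          (-1 : ℚ) ^ (n - j + 1) * bt j / ((n - j + 1).factorial : ℚ))
        = ∑ j ∈ Finset.Icc 2 (n - 1),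
          (-1 : ℚ) ^ (n - j + 1) * e j / ((n - j + 1).factorial : ℚ) := by
      rw [← Finset.sum_sub_distrib]
      exact Finset.sum_congr rfl fun j _ => by simp only [hedef]; ring
    simp only [hedef]
    rw [h1, h2]
    linear_combination hs
  intro l hl
  have h0 := Stmt8Aux.odd_zero e he (2 * l + 1) (by omega) ⟨l, by ring⟩
  simp only [hedef] at h0
  linarith
end

section
/- Define rational numbers α_{n,t} for n ≥ 2 and 1 ≤ t ≤ n−1 by the recurrence α_{n,t} = −∑_{(i,j)≠(0,0), 0≤i≤t−1, 0≤j≤n−t−1} α_{n−i−j, t−i}/((i+1)!·(j+1)!) + 1/((t+1)!·(n−t+1)!) − 1/(n+1)!. Then α_{n,t} = B_n/n! for all such n and t; in particular α_{n,t} is independent of t. -/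
open Finset

private lemma lemA (m : ℕ) (hm : 1 ≤ m) :
    ∑ j ∈ Finset.range (m + 1),
      (bernoulli (m - j) : ℚ) / ((m - j).factorial : ℚ) / ((j + 1).factorial : ℚ) = 0 := by
  have h := sum_bernoulli (m + 1)
  rw [if_neg (by omega)] at h
  rw [← Finset.sum_range_reflect]
  have key : ∀ j ∈ Finset.range (m + 1),
      (bernoulli (m - (m + 1 - 1 - j)) : ℚ) / ((m - (m + 1 - 1 - j)).factorial : ℚ) /
          (((m + 1 - 1 - j) + 1).factorial : ℚ)
        = ((m + 1).choose j : ℚ) * bernoulli j / (((m + 1).factorial : ℚ)) := by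
    intro j hj
    rw [Finset.mem_range] at hj
    have hj' : j ≤ m := by omega
    have e1 : m + 1 - 1 - j = m - j := by omega
    have e2 : m - (m - j) = j := by omega
    have e3 : (m - j) + 1 = m + 1 - j := by omega
    rw [e1, e2, e3, Nat.cast_choose ℚ (by omega : j ≤ m + 1)]
    have h1 : ((j.factorial : ℚ)) ≠ 0 := Nat.cast_ne_zero.mpr j.factorial_ne_zero
    have h2 : (((m + 1 - j).factorial : ℚ)) ≠ 0 := Nat.cast_ne_zero.mpr (m + 1 - j).factorial_ne_zero
    have h3 : (((m + 1).factorial : ℚ)) ≠ 0 := Nat.cast_ne_zero.mpr (m + 1).factorial_ne_zero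
    field_simp
  rw [Finset.sum_congr rfl key, ← Finset.sum_div, h, zero_div]

private lemma lemB (m : ℕ) (hm : 2 ≤ m) :
    ∑ j ∈ Finset.range (m - 1),
      (bernoulli (m - j) : ℚ) / ((m - j).factorial : ℚ) / ((j + 1).factorial : ℚ)
      = 1 / (2 * (m.factorial : ℚ)) - 1 / ((m + 1).factorial : ℚ) := by
  have h := lemA m (by omega)
  have e : m + 1 = (m - 1) + 1 + 1 := by omega
  rw [e, Finset.sum_range_succ, Finset.sum_range_succ] at h
  have e1 : m - 1 + 1 = m := by omega
  rw [e1] at h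
  have e2 : m - (m - 1) = 1 := by omega
  have e3 : m - m = 0 := by omega
  rw [e2, e3, bernoulli_one, bernoulli_zero] at h
  have hm0 : ((m.factorial : ℚ)) ≠ 0 := Nat.cast_ne_zero.mpr m.factorial_ne_zero
  have hm1 : (((m + 1).factorial : ℚ)) ≠ 0 := Nat.cast_ne_zero.mpr (m + 1).factorial_ne_zero
  simp only [Nat.factorial_one, Nat.factorial_zero] at h
  push_cast at h
  have := h
  field_simp at this ⊢
  linarith [this]

private lemma lemC : ∀ (a b : ℕ), 1 ≤ a → 1 ≤ b →
    ∑ i ∈ Finset.range a, ∑ j ∈ Finset.range b,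
      (bernoulli (a + b - i - j) : ℚ) / ((a + b - i - j).factorial : ℚ) /
        (((i + 1).factorial : ℚ) * ((j + 1).factorial : ℚ))
      = 1 / (((a + 1).factorial : ℚ) * ((b + 1).factorial : ℚ)) - 1 / ((a + b + 1).factorial : ℚ) := by
  intro a
  induction a with
  | zero => intro b ha; omega
  | succ a IH =>
    intro b _ hb
    rcases Nat.eq_zero_or_pos a with rfl | ha
    · -- base case a = 0, i.e. outer index range 1
      rw [Finset.sum_range_one]
      have hB := lemB (b + 1) (by omega)
      have e1 : (b + 1) - 1 = b := by omega
      rw [e1] at hB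
      have key : ∀ j ∈ Finset.range b,
          (bernoulli (0 + 1 + b - 0 - j) : ℚ) / ((0 + 1 + b - 0 - j).factorial : ℚ) /
            (((0 + 1).factorial : ℚ) * ((j + 1).factorial : ℚ))
          = (bernoulli (b + 1 - j) : ℚ) / ((b + 1 - j).factorial : ℚ) / ((j + 1).factorial : ℚ) := by
        intro j hj
        have e : 0 + 1 + b - 0 - j = b + 1 - j := by omega
        rw [e]
        norm_num [Nat.factorial_one]
      rw [Finset.sum_congr rfl key, hB]
      have e2 : (0 : ℕ) + 1 + b + 1 = b + 2 := by omega
      rw [e2]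
      norm_num [Nat.factorial]
    · -- inductive step, a ≥ 1
      rw [Finset.sum_range_succ]
      -- rewrite inner terms of the first part to match IH at b+1
      have key1 : ∀ i ∈ Finset.range a,
          (∑ j ∈ Finset.range b,
            (bernoulli (a + 1 + b - i - j) : ℚ) / ((a + 1 + b - i - j).factorial : ℚ) /
              (((i + 1).factorial : ℚ) * ((j + 1).factorial : ℚ)))
          = (∑ j ∈ Finset.range (b + 1),
            (bernoulli (a + (b + 1) - i - j) : ℚ) / ((a + (b + 1) - i - j).factorial : ℚ) /
              (((i + 1).factorial : ℚ) * ((j + 1).factorial : ℚ)))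
            - (bernoulli (a + 1 - i) : ℚ) / ((a + 1 - i).factorial : ℚ) /
              (((i + 1).factorial : ℚ) * ((b + 1).factorial : ℚ)) := by
        intro i hi
        rw [Finset.mem_range] at hi
        rw [Finset.sum_range_succ]
        have e : a + (b + 1) - i - b = a + 1 - i := by omega
        rw [e]
        have key : ∀ j ∈ Finset.range b,
            (bernoulli (a + 1 + b - i - j) : ℚ) / ((a + 1 + b - i - j).factorial : ℚ) /
              (((i + 1).factorial : ℚ) * ((j + 1).factorial : ℚ))
            = (bernoulli (a + (b + 1) - i - j) : ℚ) / ((a + (b + 1) - i - j).factorial : ℚ) /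
              (((i + 1).factorial : ℚ) * ((j + 1).factorial : ℚ)) := by
          intro j hj
          have e2 : a + 1 + b - i - j = a + (b + 1) - i - j := by omega
          rw [e2]
        rw [Finset.sum_congr rfl key]
        ring
      rw [Finset.sum_congr rfl key1, Finset.sum_sub_distrib]
      have hIH := IH (b + 1) ha (by omega)
      rw [hIH]
      -- column sum: ∑ i < a, β(a+1-i)/((i+1)! (b+1)!)
      have hcol : (∑ i ∈ Finset.range a,
          (bernoulli (a + 1 - i) : ℚ) / ((a + 1 - i).factorial : ℚ) /
            (((i + 1).factorial : ℚ) * ((b + 1).factorial : ℚ)))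
          = (1 / (2 * ((a + 1).factorial : ℚ)) - 1 / ((a + 2).factorial : ℚ)) /
              ((b + 1).factorial : ℚ) := by
        have hB := lemB (a + 1) (by omega)
        have e1 : (a + 1) - 1 = a := by omega
        rw [e1] at hB
        have e2 : a + 1 + 1 = a + 2 := by omega
        rw [e2] at hB
        rw [← hB, Finset.sum_div]
        apply Finset.sum_congr rfl
        intro i hi
        ring
      -- row sum at i = a
      have hrow : (∑ j ∈ Finset.range b,
          (bernoulli (a + 1 + b - a - j) : ℚ) / ((a + 1 + b - a - j).factorial : ℚ) /
            (((a + 1).factorial : ℚ) * ((j + 1).factorial : ℚ)))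
          = (1 / (2 * ((b + 1).factorial : ℚ)) - 1 / ((b + 2).factorial : ℚ)) /
              ((a + 1).factorial : ℚ) := by
        have hB := lemB (b + 1) (by omega)
        have e1 : (b + 1) - 1 = b := by omega
        rw [e1] at hB
        have e2 : b + 1 + 1 = b + 2 := by omega
        rw [e2] at hB
        rw [← hB, Finset.sum_div]
        apply Finset.sum_congr rfl
        intro j hj
        rw [Finset.mem_range] at hj
        have e3 : a + 1 + b - a - j = b + 1 - j := by omega
        rw [e3]
        ring
      rw [hcol, hrow]
      have e4 : a + (b + 1) + 1 = a + b + 2 := by omega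
      have e5 : a + 1 + b + 1 = a + b + 2 := by omega
      have e6 : a + 1 + 1 = a + 2 := by omega
      rw [e4, e5, e6]
      have h1 : (((a + 1).factorial : ℚ)) ≠ 0 := Nat.cast_ne_zero.mpr (a+1).factorial_ne_zero
      have h2 : (((a + 2).factorial : ℚ)) ≠ 0 := Nat.cast_ne_zero.mpr (a+2).factorial_ne_zero
      have h3 : (((b + 1).factorial : ℚ)) ≠ 0 := Nat.cast_ne_zero.mpr (b+1).factorial_ne_zero
      have h4 : (((b + 2).factorial : ℚ)) ≠ 0 := Nat.cast_ne_zero.mpr (b+2).factorial_ne_zero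
      have h5 : (((a + b + 2).factorial : ℚ)) ≠ 0 := Nat.cast_ne_zero.mpr (a+b+2).factorial_ne_zero
      field_simp
      ring

/-- If `α : ℕ → ℕ → ℚ` satisfies, for all `n ≥ 2` and `1 ≤ t ≤ n−1`,
`α n t = −∑_{(i,j)≠(0,0), 0≤i≤t−1, 0≤j≤n−t−1} α (n−i−j) (t−i) /((i+1)!·(j+1)!)
  + 1/((t+1)!·(n−t+1)!) − 1/(n+1)!`,
then `α n t = B_n/n!` for all such `n, t`. -/
theorem stmt_11 (α : ℕ → ℕ → ℚ)
    (hα : ∀ n t : ℕ, 2 ≤ n → 1 ≤ t → t ≤ n - 1 →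
      α n t = -(∑ i ∈ Finset.range t, ∑ j ∈ Finset.range (n - t),
          if i + j = 0 then 0
          else α (n - i - j) (t - i) / (((i + 1).factorial : ℚ) * ((j + 1).factorial : ℚ)))
        + 1 / (((t + 1).factorial : ℚ) * ((n - t + 1).factorial : ℚ))
        - 1 / ((n + 1).factorial : ℚ)) :
    ∀ n t : ℕ, 2 ≤ n → 1 ≤ t → t ≤ n - 1 →
      α n t = bernoulli n / (n.factorial : ℚ) := by
  intro n
  induction n using Nat.strong_induction_on with
  | _ n IH =>
    intro t hn ht1 ht2
    rw [hα n t hn ht1 ht2]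
    have hsum : (∑ i ∈ Finset.range t, ∑ j ∈ Finset.range (n - t),
          if i + j = 0 then 0
          else α (n - i - j) (t - i) / (((i + 1).factorial : ℚ) * ((j + 1).factorial : ℚ)))
        = (∑ i ∈ Finset.range t, ∑ j ∈ Finset.range (n - t),
            (bernoulli (n - i - j) : ℚ) / ((n - i - j).factorial : ℚ) /
              (((i + 1).factorial : ℚ) * ((j + 1).factorial : ℚ)))
          - (bernoulli n : ℚ) / (n.factorial : ℚ) := by
      have step1 : (∑ i ∈ Finset.range t, ∑ j ∈ Finset.range (n - t),
            if i + j = 0 then 0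
            else α (n - i - j) (t - i) / (((i + 1).factorial : ℚ) * ((j + 1).factorial : ℚ)))
          = ∑ i ∈ Finset.range t, ∑ j ∈ Finset.range (n - t),
            (if i + j = 0 then 0
            else (bernoulli (n - i - j) : ℚ) / ((n - i - j).factorial : ℚ) /
              (((i + 1).factorial : ℚ) * ((j + 1).factorial : ℚ))) := by
        apply Finset.sum_congr rfl
        intro i hi
        apply Finset.sum_congr rfl
        intro j hj
        rw [Finset.mem_range] at hi hj
        split_ifs with h
        · rfl
        · rw [IH (n - i - j) (by omega) (t - i) (by omega) (by omega) (by omega), div_div]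
      rw [step1]
      have step2 : ∀ i ∈ Finset.range t, (∑ j ∈ Finset.range (n - t),
            (if i + j = 0 then 0
            else (bernoulli (n - i - j) : ℚ) / ((n - i - j).factorial : ℚ) /
              (((i + 1).factorial : ℚ) * ((j + 1).factorial : ℚ))))
          = (∑ j ∈ Finset.range (n - t),
              (bernoulli (n - i - j) : ℚ) / ((n - i - j).factorial : ℚ) /
                (((i + 1).factorial : ℚ) * ((j + 1).factorial : ℚ)))
            - (if i = 0 then (bernoulli n : ℚ) / (n.factorial : ℚ) else 0) := by
        intro i hi
        rw [Finset.mem_range] at hi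
        have e : ∀ j ∈ Finset.range (n - t),
            (if i + j = 0 then 0
            else (bernoulli (n - i - j) : ℚ) / ((n - i - j).factorial : ℚ) /
              (((i + 1).factorial : ℚ) * ((j + 1).factorial : ℚ)))
            = ((bernoulli (n - i - j) : ℚ) / ((n - i - j).factorial : ℚ) /
                (((i + 1).factorial : ℚ) * ((j + 1).factorial : ℚ)))
              - (if j = 0 then (if i = 0 then (bernoulli n : ℚ) / (n.factorial : ℚ) else 0) else 0) := by
          intro j hj
          by_cases h1 : i = 0 <;> by_cases h2 : j = 0 <;>
            simp [h1, h2, Nat.factorial_one]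
        rw [Finset.sum_congr rfl e, Finset.sum_sub_distrib]
        congr 1
        rw [Finset.sum_ite_eq' (Finset.range (n - t)) 0
          (fun _ => (if i = 0 then (bernoulli n : ℚ) / (n.factorial : ℚ) else 0))]
        rw [if_pos (Finset.mem_range.mpr (by omega : 0 < n - t))]
      rw [Finset.sum_congr rfl step2, Finset.sum_sub_distrib]
      congr 1
      rw [Finset.sum_ite_eq' (Finset.range t) 0
        (fun _ => (bernoulli n : ℚ) / (n.factorial : ℚ))]
      rw [if_pos (Finset.mem_range.mpr (by omega : 0 < t))]
    rw [hsum]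
    have hC := lemC t (n - t) ht1 (by omega)
    have hnt : t + (n - t) = n := by omega
    rw [hnt] at hC
    rw [hC]
    ring
end

section
/- Define rational numbers δ'_n for n ≥ 4 by the recurrence δ'_n = −∑_{i=1}^{n−4} δ'_{n−i}/(i+1)! − 1/(4·(n−1)!) + 1/n! − 1/(2^{n−1}·n!). Then δ'_n = (B_n/n!)·(4 − 1/2^{n−2}) for all n ≥ 4, where B_n is the n-th Bernoulli number. -/
open Finset

private noncomputable def fB (n : ℕ) : ℚ :=
  bernoulli n / (n.factorial : ℚ) * (4 - 1 / (2 : ℚ) ^ (n - 2))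

private lemma two_sum (n : ℕ) (hn : 4 ≤ n) :
    ∑ i ∈ range (n + 1), bernoulli i * ((n + 1).choose i : ℚ) * 2 ^ (n + 1 - i) = n + 1 := by
  have h := sum_range_pow 2 n
  have h2 : (∑ k ∈ range 2, (k : ℚ) ^ n) = 1 := by
    rw [show (2:ℕ) = 1 + 1 from rfl, Finset.sum_range_succ, Finset.sum_range_one]
    simp
    omega
  have hne : ((n : ℚ) + 1) ≠ 0 := by positivity
  rw [h2, ← Finset.sum_div, eq_comm, div_eq_iff hne] at h
  push_cast at h ⊢
  linarith [h]

/-- The key identity: the explicit formula satisfies the recurrence. -/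
private lemma key_s12 (n : ℕ) (hn : 4 ≤ n) :
    fB n = -∑ j ∈ Finset.Icc 4 (n - 1), fB j / (((n - j) + 1).factorial : ℚ)
        - 1 / (4 * ((n - 1).factorial : ℚ)) + 1 / (n.factorial : ℚ)
        - 1 / ((2 : ℚ) ^ (n - 1) * (n.factorial : ℚ)) := by
  have hfac : ∀ m : ℕ, ((m.factorial : ℚ)) ≠ 0 := fun m => by
    exact_mod_cast m.factorial_ne_zero
  -- rewrite each term of the sum via binomial coefficients
  have hterm : ∀ j ∈ Finset.Icc 4 (n - 1),
      fB j / (((n - j) + 1).factorial : ℚ)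
        = (((n+1).choose j : ℚ) * bernoulli j * (4 - 4 / 2 ^ j)) / ((n+1).factorial : ℚ) := by
    intro j hj
    simp only [Finset.mem_Icc] at hj
    have hjn : j ≤ n + 1 := by omega
    have hch : (((n+1).choose j : ℚ)) = ((n+1).factorial : ℚ) / ((j.factorial : ℚ) *
        (((n+1) - j).factorial : ℚ)) := Nat.cast_choose ℚ hjn
    have hsub : (n + 1) - j = (n - j) + 1 := by omega
    have hpow : (4 : ℚ) - 1 / (2:ℚ) ^ (j - 2) = 4 - 4 / 2 ^ j := by
      obtain ⟨k, rfl⟩ : ∃ k, j = k + 2 := ⟨j - 2, by omega⟩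
      have : (2:ℚ) ^ (k + 2) = (2:ℚ) ^ k * 4 := by rw [pow_add]; norm_num
      rw [show k + 2 - 2 = k from rfl, this]
      have h2 : ((2:ℚ) ^ k) ≠ 0 := by positivity
      field_simp
    rw [hsub] at hch
    unfold fB
    rw [hpow, hch]
    have h1 := hfac j
    have h2 := hfac ((n - j) + 1)
    have h3 := hfac (n + 1)
    field_simp
  rw [Finset.sum_congr rfl hterm, ← Finset.sum_div]
  -- now evaluate ∑_{j=4}^{n-1} C(n+1,j) B_j (4 - 4/2^j)
  set G : ℕ → ℚ := fun j => ((n+1).choose j : ℚ) * bernoulli j * (4 - 4 / 2 ^ j) with hG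
  have hfull : ∑ j ∈ range (n + 1), G j = -(4 * (n + 1)) / 2 ^ (n + 1) := by
    have e1 : ∑ j ∈ range (n + 1), ((n+1).choose j : ℚ) * bernoulli j = 0 := by
      rw [sum_bernoulli]; simp; omega
    have e2 : ∑ j ∈ range (n + 1), ((n+1).choose j : ℚ) * bernoulli j / 2 ^ j
        = (n + 1) / 2 ^ (n + 1) := by
      have e3 := two_sum n hn
      have : ∀ j ∈ range (n + 1),
          ((n+1).choose j : ℚ) * bernoulli j / 2 ^ j
            = bernoulli j * ((n + 1).choose j : ℚ) * 2 ^ (n + 1 - j) / 2 ^ (n + 1) := by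
        intro j hj
        simp only [Finset.mem_range] at hj
        have hp : (2:ℚ) ^ (n + 1 - j) * 2 ^ j = 2 ^ (n + 1) := by
          rw [← pow_add]; congr 1; omega
        have hj2 : ((2:ℚ) ^ j) ≠ 0 := by positivity
        have hn2 : ((2:ℚ) ^ (n+1)) ≠ 0 := by positivity
        field_simp
        linear_combination (-(bernoulli j * (((n+1).choose j : ℚ)))) * hp
      rw [Finset.sum_congr rfl this, ← Finset.sum_div, e3]
    have expand : ∀ j ∈ range (n + 1),
        G j = 4 * (((n+1).choose j : ℚ) * bernoulli j)
          - 4 * (((n+1).choose j : ℚ) * bernoulli j / 2 ^ j) := by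
      intro j _
      have hj2 : ((2:ℚ) ^ j) ≠ 0 := by positivity
      simp only [hG]; field_simp
    rw [Finset.sum_congr rfl expand, Finset.sum_sub_distrib, ← Finset.mul_sum, ← Finset.mul_sum,
      e1, e2]
    have : ((2:ℚ) ^ (n+1)) ≠ 0 := by positivity
    field_simp
    ring
  -- split off terms j = 0,1,2,3 and j = n
  obtain ⟨m, rfl⟩ : ∃ m, n = m + 4 := ⟨n - 4, by omega⟩
  have hsplit : ∑ j ∈ Finset.Icc 4 (m + 4 - 1), G j
      = ∑ j ∈ range (m + 4 + 1), G j - (G 0 + G 1 + G 2 + G 3) - G (m + 4) := by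
    have h1 : ∑ j ∈ range (m + 4 + 1), G j = ∑ j ∈ range (m + 4), G j + G (m + 4) :=
      Finset.sum_range_succ G (m + 4)
    have h2 : ∑ j ∈ range (m + 4), G j
        = ∑ j ∈ Finset.Ico 0 4, G j + ∑ j ∈ Finset.Ico 4 (m + 4), G j := by
      rw [Finset.range_eq_Ico, ← Finset.sum_Ico_consecutive G (by omega : 0 ≤ 4)
        (by omega : 4 ≤ m + 4)]
    have h3 : ∑ j ∈ Finset.Ico 0 4, G j = G 0 + G 1 + G 2 + G 3 := by
      show ∑ j ∈ range 4, G j = _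
      first
      | (simp [Finset.sum_range_succ]; ring)
      | simp [Finset.sum_range_succ]
    have h4 : Finset.Icc 4 (m + 4 - 1) = Finset.Ico 4 (m + 4) := by
      rw [show m + 4 = (m + 3) + 1 from rfl, Finset.Ico_add_one_right_eq_Icc]
      rfl
    rw [h4]
    rw [h1, h2, h3] at *
    ring
  rw [hsplit, hfull]
  -- compute the boundary terms
  have hG0 : G 0 = 0 := by simp [hG]
  have hG3 : G 3 = 0 := by
    have : bernoulli 3 = 0 := by
      simp [bernoulli, bernoulli'_three]
    simp [hG, this]
  have hG1 : G 1 = -(m + 5) := by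
    simp only [hG, Nat.choose_one_right, bernoulli_one]
    push_cast
    norm_num
    ring
  have hB2 : bernoulli 2 = 1 / 6 := by simp [bernoulli, bernoulli'_two]
  have hG2 : G 2 = ((m:ℚ) + 5) * ((m:ℚ) + 4) / 4 := by
    have hc : (((m + 4 + 1).choose 2 : ℕ) : ℚ)
        = ((m + 5).factorial : ℚ) / (((2:ℕ).factorial : ℚ) * ((m + 3).factorial : ℚ)) := by
      rw [Nat.cast_choose ℚ (by omega : 2 ≤ m + 4 + 1),
        show m + 4 + 1 - 2 = m + 3 from rfl]
    have hf5 : ((m + 5).factorial : ℚ) = ((m:ℚ) + 5) * (((m:ℚ) + 4) * ((m + 3).factorial : ℚ)) := by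
      rw [show m + 5 = (m + 4) + 1 from rfl, Nat.factorial_succ,
        show m + 4 = (m + 3) + 1 from rfl, Nat.factorial_succ]
      push_cast
      ring
    simp only [hG, hB2, show m + 4 + 1 = m + 5 from rfl, hc, hf5]
    have := hfac (m + 3)
    field_simp
    ring
  have hGn : G (m + 4) = ((m:ℚ) + 5) * bernoulli (m + 4) * (4 - 4 / 2 ^ (m + 4)) := by
    simp only [hG, show m + 4 + 1 = (m + 4) + 1 from rfl, Nat.choose_succ_self_right]
    push_cast
    ring
  rw [hG0, hG1, hG2, hG3, hGn]
  -- now pure algebra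
  unfold fB
  have hf4 : ((m + 4).factorial : ℚ) = ((m:ℚ) + 4) * ((m + 3).factorial : ℚ) := by
    rw [show m + 4 = (m + 3) + 1 from rfl, Nat.factorial_succ]; push_cast; ring
  have hf5 : ((m + 4 + 1).factorial : ℚ) = ((m:ℚ) + 5) * ((m + 4).factorial : ℚ) := by
    rw [show m + 4 + 1 = (m + 4) + 1 from rfl, Nat.factorial_succ]; push_cast; ring
  have e1 : (2:ℚ) ^ (m + 4 + 1) = 2 ^ (m + 2) * 8 := by rw [pow_add, pow_add]; ring
  have e2 : (2:ℚ) ^ (m + 4) = 2 ^ (m + 2) * 4 := by rw [pow_add, pow_add]; ring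
  have e3 : (2:ℚ) ^ (m + 4 - 1) = 2 ^ (m + 2) * 2 := by
    rw [show m + 4 - 1 = (m + 2) + 1 from rfl, pow_add]; ring
  rw [show m + 4 - 1 = m + 3 from rfl, show m + 4 - 2 = m + 2 from rfl] at *
  rw [hf5, hf4, e1, e2, e3]
  have h1 := hfac (m + 3)
  have h2 : ((2:ℚ) ^ (m + 2)) ≠ 0 := by positivity
  have h3 : ((m:ℚ) + 4) ≠ 0 := by positivity
  have h4 : ((m:ℚ) + 5) ≠ 0 := by positivity
  push_cast
  field_simp
  ring

/-- If `δ' : ℕ → ℚ` satisfies, for all `n ≥ 4`,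
`δ'_n = −∑_{i=1}^{n−4} δ'_{n−i}/(i+1)! − 1/(4·(n−1)!) + 1/n! − 1/(2^{n−1}·n!)`,
then `δ'_n = (B_n/n!)·(4 − 1/2^{n−2})` for all `n ≥ 4`. -/
theorem stmt_12 (δ : ℕ → ℚ)
    (hδ : ∀ n, 4 ≤ n →
      δ n = -∑ i ∈ Finset.Icc 1 (n - 4), δ (n - i) / ((i + 1).factorial : ℚ)
        - 1 / (4 * ((n - 1).factorial : ℚ)) + 1 / (n.factorial : ℚ)
        - 1 / ((2 : ℚ) ^ (n - 1) * (n.factorial : ℚ))) :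
    ∀ n, 4 ≤ n →
      δ n = bernoulli n / (n.factorial : ℚ) * (4 - 1 / (2 : ℚ) ^ (n - 2)) := by
  intro n
  induction n using Nat.strong_induction_on with
  | _ n ih =>
    intro hn
    have hrw : ∀ i ∈ Finset.Icc 1 (n - 4),
        δ (n - i) / ((i + 1).factorial : ℚ) = fB (n - i) / ((i + 1).factorial : ℚ) := by
      intro i hi
      simp only [Finset.mem_Icc] at hi
      have h1 : n - i < n := by omega
      have h2 : 4 ≤ n - i := by omega
      rw [ih (n - i) h1 h2]; rfl
    have hre : ∑ i ∈ Finset.Icc 1 (n - 4), fB (n - i) / ((i + 1).factorial : ℚ)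
        = ∑ j ∈ Finset.Icc 4 (n - 1), fB j / (((n - j) + 1).factorial : ℚ) := by
      apply Finset.sum_bij' (fun i _ => n - i) (fun j _ => n - j)
      · intro a ha; simp only [Finset.mem_Icc] at ha ⊢; omega
      · intro a ha; simp only [Finset.mem_Icc] at ha ⊢; omega
      · intro a ha; simp only [Finset.mem_Icc] at ha; omega
      · intro a ha; simp only [Finset.mem_Icc] at ha; omega
      · intro a ha; simp only [Finset.mem_Icc] at ha
        have h' : n - (n - a) = a := by omega
        rw [h']
    rw [hδ n hn, Finset.sum_congr rfl hrw, hre, ← key_s12 n hn]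
    rfl
end
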